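/- A second countable normal Hausdorff space embeds into the Banach space l¹(ℕ). -/

import Mathlib

noncomputable section
open Set Topology TopologicalSpace

/-- `𝒰` is an open cover of `X`. -/
def IsOpenCover {X : Type} [TopologicalSpace X] (𝒰 : Set (Set X)) : Prop :=
  (∀ U ∈ 𝒰, IsOpen U) ∧ ⋃₀ 𝒰 = univ

/-- Star of a point with respect to a family of sets. -/
def ptStar {X : Type} (x : X) (𝒰 : Set (Set X)) : Set X := ⋃₀ {U | U ∈ 𝒰 ∧ x ∈ U}

/-- Star of a set with respect to a family of sets. -/
def setStar {X : Type} (A : Set X) (𝒰 : Set (Set X)) : Set X :=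
  ⋃₀ {U | U ∈ 𝒰 ∧ (U ∩ A).Nonempty}

/-- `𝒱` star-refines `𝒰`. -/
def StarRefines {X : Type} (𝒱 𝒰 : Set (Set X)) : Prop :=
  ∀ x : X, ∃ U ∈ 𝒰, ptStar x 𝒱 ⊆ U

/-- A continuous partition of unity viewed as a map into `l¹(S)` with image in `Δ(S)`. -/
def IsPU {X S : Type} [TopologicalSpace X] (f : X → lp (fun _ : S => ℝ) 1) : Prop :=
  Continuous f ∧ ∀ x : X, (∀ s : S, 0 ≤ f x s) ∧ HasSum (fun s => f x s) 1

/-- The partition of unity `f` is `𝒰`-small: each carrier lies in a member of `𝒰`. -/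
def IsUSmall {X S : Type} [TopologicalSpace X] (𝒰 : Set (Set X))
    (f : X → lp (fun _ : S => ℝ) 1) : Prop :=
  ∀ s : S, ∃ U ∈ 𝒰, {x : X | f x s ≠ 0} ⊆ U

/-- There exists a `𝒰`-small partition of unity on `X`. -/
def ExistsUSmallPU {X : Type} [TopologicalSpace X] (𝒰 : Set (Set X)) : Prop :=
  ∃ (S : Type) (f : X → lp (fun _ : S => ℝ) 1), IsPU f ∧ IsUSmall 𝒰 f

/-- An indexed family of sets is discrete. -/
def DiscreteFam {X S : Type} [TopologicalSpace X] (A : S → Set X) : Prop :=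
  ∀ x : X, ∃ N ∈ nhds x, {s : S | (A s ∩ N).Nonempty}.Subsingleton

/-- A family of sets (as a set of sets) is discrete. -/
def DiscreteSetFam {X : Type} [TopologicalSpace X] (𝒜 : Set (Set X)) : Prop :=
  ∀ x : X, ∃ N ∈ nhds x, {A | A ∈ 𝒜 ∧ (A ∩ N).Nonempty}.Subsingleton

/-- `𝒰` has a σ-discrete closed refinement. -/
def HasSigmaDiscreteClosedRefinement {X : Type} [TopologicalSpace X]
    (𝒰 : Set (Set X)) : Prop :=
  ∃ D : ℕ → Set (Set X), (∀ n, DiscreteSetFam (D n)) ∧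
    (∀ n, ∀ F ∈ D n, IsClosed F) ∧
    (∀ n, ∀ F ∈ D n, ∃ U ∈ 𝒰, F ⊆ U) ∧
    ⋃₀ (⋃ n, D n) = univ

/-- `X` is collectionwise normal. -/
def CwNormal (X : Type) [TopologicalSpace X] : Prop :=
  ∀ (S : Type) (A : S → Set X), (∀ s, IsClosed (A s)) → DiscreteFam A →
    ∃ V : S → Set X, (∀ s, IsOpen (V s)) ∧ (∀ s, A s ⊆ V s) ∧ DiscreteFam V


open Metric Filter

lemma lp_single_sub (n : ℕ) (a b : ℝ) :
    lp.single (E := fun _ : ℕ => ℝ) 1 n a - lp.single 1 n b = lp.single 1 n (a - b) := by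
  apply lp.ext
  ext j
  simp only [lp.coeFn_sub, Pi.sub_apply, lp.single_apply]
  by_cases h : j = n <;> simp [h]

lemma lp_single_isometry (n : ℕ) :
    Isometry (fun a : ℝ => lp.single (E := fun _ : ℕ => ℝ) 1 n a) := by
  intro a b
  rw [edist_dist, edist_dist, dist_eq_norm, dist_eq_norm, lp_single_sub]
  congr 1
  have := lp.norm_single (E := fun _ : ℕ => ℝ) (p := 1) (by norm_num) n (a - b)
  simpa using this

lemma lp_norm_single' (a : ℝ) (n : ℕ) :
    ‖lp.single (E := fun _ : ℕ => ℝ) 1 n a‖ = |a| := by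
  have := lp.norm_single (E := fun _ : ℕ => ℝ) (p := 1) (by norm_num) n a
  simpa using this

/-- A second countable normal Hausdorff space embeds into `l¹(ℕ)`. -/
theorem stmt0 (X : Type) [TopologicalSpace X] [SecondCountableTopology X]
    [NormalSpace X] [T2Space X] :
    ∃ f : X → lp (fun _ : ℕ => ℝ) 1, IsEmbedding f := by
  haveI : Fact ((1:ENNReal) ≤ 1) := ⟨le_refl _⟩
  rcases exists_countable_basis X with ⟨B, hBc, -, hB⟩
  let s : Set (Set X × Set X) := { UV ∈ B ×ˢ B | closure UV.1 ⊆ UV.2 }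
  haveI : Encodable s := ((hBc.prod hBc).mono inter_subset_left).toEncodable
  have hd : ∀ UV : s, Disjoint (closure UV.1.1) UV.1.2ᶜ :=
    fun UV => disjoint_compl_right.mono_right (compl_subset_compl.2 UV.2.2)
  have key : ∀ UV : s, ∃ f : C(X, ℝ),
      EqOn f 0 (closure UV.1.1) ∧ EqOn f 1 UV.1.2ᶜ ∧ ∀ x, f x ∈ Icc (0:ℝ) 1 := fun UV =>
    exists_continuous_zero_one_of_isClosed isClosed_closure
      (hB.isOpen UV.2.1.2).isClosed_compl (hd UV)
  choose f hf0 hf1 hf01 using key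
  -- the scaled functions
  set g' : s → X → ℝ := fun UV x => (1/2 : ℝ) ^ (Encodable.encode UV) * (1 - f UV x) with hg'
  set g : ℕ → X → ℝ := fun n => (Encodable.decode₂ s n).elim (fun _ => (0:ℝ)) g' with hg
  have hg_encode : ∀ UV : s, g (Encodable.encode UV) = g' UV := by
    intro UV
    simp [hg, Encodable.decode₂_encode]
  have hg'_nonneg : ∀ UV x, 0 ≤ g' UV x := fun UV x =>
    mul_nonneg (by positivity) (by linarith [(hf01 UV x).2])
  have hg'_le : ∀ UV x, g' UV x ≤ (1/2 : ℝ) ^ (Encodable.encode UV) := fun UV x => by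
    have h1 : 1 - f UV x ≤ 1 := by linarith [(hf01 UV x).1]
    calc g' UV x ≤ (1/2 : ℝ) ^ (Encodable.encode UV) * 1 :=
          mul_le_mul_of_nonneg_left h1 (by positivity)
      _ = _ := mul_one _
  have hg_bound : ∀ n x, g n x ∈ Icc (0:ℝ) ((1/2:ℝ)^n) := by
    intro n x
    rcases h : Encodable.decode₂ s n with _ | UV
    · constructor <;> simp [hg, h]
    · have hn : Encodable.encode UV = n := Encodable.decode₂_eq_some.mp h
      have : g n = g' UV := by simp [hg, h]
      rw [this]
      exact ⟨hg'_nonneg UV x, hn ▸ hg'_le UV x⟩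
  have hg_cont : ∀ n, Continuous (g n) := by
    intro n
    rcases h : Encodable.decode₂ s n with _ | UV
    · simpa [hg, h] using continuous_const
    · have : g n = g' UV := by simp [hg, h]
      rw [this]
      exact continuous_const.mul (continuous_const.sub (f UV).continuous)
  -- the map into l¹
  have hmem : ∀ x : X, Memℓp (fun n => g n x) 1 := by
    intro x
    apply memℓp_gen
    have : Summable (fun n : ℕ => (1/2:ℝ)^n) := summable_geometric_of_lt_one (by norm_num) (by norm_num)
    apply this.of_nonneg_of_le (fun n => by positivity) (fun n => ?_)
    simp only [ENNReal.toReal_one, Real.rpow_one]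
    rw [Real.norm_eq_abs, abs_of_nonneg (hg_bound n x).1]
    simpa using (hg_bound n x).2
  set F : X → lp (fun _ : ℕ => ℝ) 1 := fun x => ⟨fun n => g n x, hmem x⟩ with hF
  have hFapp : ∀ x n, F x n = g n x := fun _ _ => rfl
  have hFsum : ∀ x, HasSum (fun n => lp.single (E := fun _ : ℕ => ℝ) 1 n (g n x)) (F x) :=
    fun x => lp.hasSum_single (by norm_num) (F x)
  -- continuity
  have hFcont : Continuous F := by
    have := continuous_tsum (f := fun n x => lp.single (E := fun _ : ℕ => ℝ) 1 n (g n x))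
      (u := fun n => (1/2:ℝ)^n)
      (fun n => (lp_single_isometry n).continuous.comp (hg_cont n))
      (summable_geometric_of_lt_one (by norm_num) (by norm_num))
      (fun n x => by
        rw [lp_norm_single', abs_of_nonneg (hg_bound n x).1]
        exact (hg_bound n x).2)
    have heq : (fun x => ∑' n, lp.single (E := fun _ : ℕ => ℝ) 1 n (g n x)) = F := by
      funext x
      exact (hFsum x).tsum_eq
    rwa [heq] at this
  have hind : IsInducing F := by
    refine isInducing_iff_nhds.2 fun x => le_antisymm ?_ ?_
    · exact tendsto_iff_comap.mp (hFcont.tendsto x)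
    · refine ((nhds_basis_ball.comap _).le_basis_iff hB.nhds_hasBasis).2 ?_
      rintro V ⟨hVB, hxV⟩
      rcases hB.exists_closure_subset (hB.mem_nhds hVB hxV) with ⟨U, hUB, hxU, hUV⟩
      set UV : ↥s := ⟨(U, V), ⟨hUB, hVB⟩, hUV⟩
      set n := Encodable.encode UV with hn
      refine ⟨(1/2:ℝ)^n, by positivity, fun y (hy : dist (F y) (F x) < (1/2:ℝ)^n) => ?_⟩
      have hco : |g n y - g n x| ≤ dist (F y) (F x) := by
        have := lp.norm_apply_le_norm (E := fun _ : ℕ => ℝ) (p := 1) one_ne_zero (F y - F x) n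
        rw [dist_eq_norm]
        simpa [hFapp] using this
      have hgx : g n x = (1/2:ℝ)^n := by
        have hfx : f UV x = 0 := hf0 UV (subset_closure hxU)
        rw [hn, hg_encode]
        simp [hg', hfx]
      by_contra hyV
      have hgy : g n y = 0 := by
        have hfy : f UV y = 1 := hf1 UV hyV
        rw [hn, hg_encode]
        simp [hg', hfy]
      rw [hgy, hgx] at hco
      have : (1/2:ℝ)^n ≤ dist (F y) (F x) := by
        calc (1/2:ℝ)^n = |0 - (1/2:ℝ)^n| := by rw [zero_sub, abs_neg, abs_of_pos (by positivity)]
          _ ≤ _ := hco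
      linarith
  exact ⟨F, ⟨hind, hind.injective⟩⟩
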